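/- Let p be an odd prime and let b, c be integers with ((b^2+4c)/p) = −1 and ((−c)/p) = 1. Then in the field F_p[x]/(x^2−bx−c), the element x satisfies x^{(p^2−1)/2} = 1. -/

import Mathlib

open Polynomial

theorem stmt_14 (p : ℕ) [Fact p.Prime] (hodd : Odd p) (b c : ZMod p)
    (h₁ : quadraticChar (ZMod p) (b ^ 2 + 4 * c) = -1)
    (h₂ : quadraticChar (ZMod p) (-c) = 1) :
    (AdjoinRoot.root (X ^ 2 - C b * X - C c : (ZMod p)[X])) ^ ((p ^ 2 - 1) / 2) = 1 := by
  have hp := Fact.out (p := p.Prime)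
  have hp2 : p ≠ 2 := by rintro rfl; exact (by decide : ¬ Odd 2) hodd
  -- the discriminant is not a square
  have hdisc : ∀ s : ZMod p, discrim (1 : ZMod p) (-b) (-c) ≠ s ^ 2 := by
    intro s hs
    have hsq : IsSquare (b ^ 2 + 4 * c) := ⟨s, by rw [discrim] at hs; linear_combination hs⟩
    rw [quadraticChar_neg_one_iff_not_isSquare] at h₁
    exact h₁ hsq
  have hroot : ∀ x : ZMod p, x ^ 2 - b * x - c ≠ 0 := by
    intro x hx
    refine quadratic_ne_zero_of_discrim_ne_sq hdisc x ?_
    linear_combination hx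
  set f : (ZMod p)[X] := X ^ 2 - C b * X - C c with hf
  have hmonic : f.Monic := by unfold f; monicity!
  have hdeg : f.natDegree = 2 := by unfold f; compute_degree!
  have hirr : Irreducible f := by
    rw [hmonic.irreducible_iff_roots_eq_zero_of_degree_le_three (by omega) (by omega)]
    rw [Multiset.eq_zero_iff_forall_notMem]
    intro x hx
    rw [mem_roots hmonic.ne_zero] at hx
    exact hroot x (by simpa [f, IsRoot] using hx)
  haveI := Fact.mk hirr
  set K := AdjoinRoot f with hK
  set α : K := AdjoinRoot.root f with hα
  have hinj : Function.Injective (algebraMap (ZMod p) K) := (algebraMap (ZMod p) K).injective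
  haveI : CharP K p := charP_of_injective_algebraMap hinj p
  set B : K := algebraMap (ZMod p) K b with hB
  set Cc : K := algebraMap (ZMod p) K c with hCc
  have h0 : α ^ 2 - B * α - Cc = 0 := by
    have := AdjoinRoot.eval₂_root f
    simpa [f, K, α, B, Cc, AdjoinRoot.algebraMap_eq] using this
  -- Frobenius
  have hBp : B ^ p = B := by rw [hB, ← map_pow, ZMod.pow_card]
  have hCp : Cc ^ p = Cc := by rw [hCc, ← map_pow, ZMod.pow_card]
  have hfr : (α ^ p) ^ 2 - B * α ^ p - Cc = 0 := by
    have h1 : (α ^ 2 - B * α - Cc) ^ p = 0 := by rw [h0, zero_pow hp.ne_zero]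
    rw [sub_pow_char, sub_pow_char, mul_pow, hBp, hCp, ← pow_mul, mul_comm 2 p, pow_mul] at h1
    exact h1
  have key : (α ^ p - α) * (α ^ p + α - B) = 0 := by linear_combination hfr - h0
  rcases mul_eq_zero.mp key with hcase | hcase
  · -- impossible: α would lie in the prime field
    exfalso
    have hroots : ((X ^ p - X : (ZMod p)[X])).roots = Finset.univ.val := by
      have := FiniteField.roots_X_pow_card_sub_X (ZMod p)
      rwa [ZMod.card p] at this
    have hXp : (C ((X ^ p - X : (ZMod p)[X])).leadingCoeff) *
        (((X ^ p - X : (ZMod p)[X]).roots).map fun a => X - C a).prod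
        = (X ^ p - X : (ZMod p)[X]) := by
      apply C_leadingCoeff_mul_prod_multiset_X_sub_C
      rw [hroots, FiniteField.X_pow_card_sub_X_natDegree_eq (ZMod p) hp.one_lt]
      simpa using (ZMod.card p)
    have heval : (Polynomial.aeval α) (X ^ p - X : (ZMod p)[X]) = 0 := by
      simp only [map_sub, map_pow, aeval_X]
      exact hcase
    rw [← hXp] at heval
    simp only [map_mul, map_multiset_prod, Multiset.map_map, Function.comp] at heval
    rcases mul_eq_zero.mp heval with h | h
    · simp only [aeval_C] at h
      exact FiniteField.X_pow_card_sub_X_ne_zero (ZMod p) hp.one_lt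
        (leadingCoeff_eq_zero.mp (hinj (by rw [map_zero]; exact h)))
    · rw [Multiset.prod_eq_zero_iff] at h
      simp only [Multiset.mem_map] at h
      obtain ⟨a, -, ha⟩ := h
      simp only [map_sub, aeval_X, aeval_C] at ha
      have hαa : α = algebraMap (ZMod p) K a := sub_eq_zero.mp ha
      have haf : (Polynomial.aeval α) f = 0 := by
        simp only [f, map_sub, map_pow, map_mul, aeval_X, aeval_C]
        exact h0
      rw [hαa] at haf
      have h2 : algebraMap (ZMod p) K (a ^ 2 - b * a - c) = 0 := by
        rw [map_sub, map_sub, map_pow, map_mul]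
        simpa only [f, map_sub, map_pow, map_mul, aeval_X, aeval_C] using haf
      exact hroot a (hinj (h2.trans (map_zero _).symm))
  · -- main case: α^p = B - α, hence α^(p+1) = -c
    have hαp : α ^ p = B - α := by linear_combination hcase
    have hnorm : α ^ (p + 1) = - Cc := by
      rw [pow_succ, hαp]
      linear_combination -h0
    have hc0 : (-c : ZMod p) ≠ 0 := by
      intro h
      rw [h, quadraticChar_zero] at h₂
      exact one_ne_zero h₂.symm
    obtain ⟨s, hs⟩ := (quadraticChar_one_iff_isSquare hc0).mp h₂
    have hs0 : s ≠ 0 := by rintro rfl; rw [mul_zero] at hs; exact hc0 hs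
    have hcpow : (-c : ZMod p) ^ ((p - 1) / 2) = 1 := by
      rw [hs, ← sq, ← pow_mul]
      have h2 : 2 * ((p - 1) / 2) = p - 1 := by
        obtain ⟨k, hk⟩ := hodd; omega
      rw [h2, ZMod.pow_card_sub_one_eq_one hs0]
    have hexp : (p ^ 2 - 1) / 2 = (p + 1) * ((p - 1) / 2) := by
      have h21 : 2 ∣ p - 1 := by obtain ⟨k, hk⟩ := hodd; omega
      have hfac : p ^ 2 - 1 = (p + 1) * (p - 1) := by simpa using Nat.sq_sub_sq p 1
      rw [hfac, Nat.mul_div_assoc _ h21]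
    rw [hexp, pow_mul, hnorm]
    have hne : (-Cc : K) = algebraMap (ZMod p) K (-c) := by rw [map_neg, hCc]
    rw [hne, ← map_pow, hcpow, map_one]
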